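/- If (x, Π) does not engulf (x', Π'), then there exists y : ℕ → 2 that matches (x, Π) but does not match (x', Π'). -/
import Mathlib


/-- `a : ℕ → ℕ` codes a partition of ℕ into consecutive finite intervals
`[a n, a (n+1))` with `a 0 = 0` and `a` strictly increasing. -/
def IntervalPartition (a : ℕ → ℕ) : Prop := a 0 = 0 ∧ StrictMono a

/-- `y` matches the chopped real `(x, a)`: `y` agrees with `x` on infinitely
many intervals of the partition. -/
def Matches (y : ℕ → Bool) (x : ℕ → Bool) (a : ℕ → ℕ) : Prop :=
  { n : ℕ | ∀ i ∈ Set.Ico (a n) (a (n + 1)), y i = x i }.Infinite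

/-- The set of reals matching the chopped real `(x, a)`. -/
def MatchSet (x : ℕ → Bool) (a : ℕ → ℕ) : Set (ℕ → Bool) := { y | Matches y x a }

/-- `(x, a)` engulfs `(x', a')`: all but finitely many intervals of `a` include
an interval of `a'` on which `x` and `x'` agree. -/
def Engulfs (x : ℕ → Bool) (a : ℕ → ℕ) (x' : ℕ → Bool) (a' : ℕ → ℕ) : Prop :=
  { n : ℕ | ¬ ∃ m : ℕ, Set.Ico (a' m) (a' (m + 1)) ⊆ Set.Ico (a n) (a (n + 1)) ∧
      ∀ i ∈ Set.Ico (a' m) (a' (m + 1)), x i = x' i }.Finite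

/-- If `(x, a)` does not engulf `(x', a')`, then some `y` matches `(x, a)` but
not `(x', a')`. -/
theorem stmt8 (x x' : ℕ → Bool) (a a' : ℕ → ℕ)
    (ha : IntervalPartition a) (ha' : IntervalPartition a')
    (heng : ¬ Engulfs x a x' a') :
    ∃ y : ℕ → Bool, Matches y x a ∧ ¬ Matches y x' a' := by
  classical
  set p : ℕ → Prop := fun n => ¬ ∃ m : ℕ,
      Set.Ico (a' m) (a' (m + 1)) ⊆ Set.Ico (a n) (a (n + 1)) ∧
      ∀ i ∈ Set.Ico (a' m) (a' (m + 1)), x i = x' i with hp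
  have hSinf : (setOf p).Infinite := heng
  -- sparse subsequence
  set f : ℕ → ℕ := fun k => Nat.nth p (2 * k) with hf
  have hnth : StrictMono (Nat.nth p) := Nat.nth_strictMono hSinf
  have hfmono : StrictMono f := fun i j hij => hnth (by omega)
  set T : Set ℕ := Set.range f with hT
  have hTinf : T.Infinite := Set.infinite_range_of_injective hfmono.injective
  have hTsub : ∀ n ∈ T, p n := by
    rintro n ⟨k, rfl⟩
    exact Nat.nth_mem_of_infinite hSinf (2 * k)
  have hadj : ∀ n ∈ T, n + 1 ∉ T := by
    rintro n ⟨k, rfl⟩ ⟨j, hj⟩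
    simp only [hf] at hj
    have h1 : Nat.nth p (2 * k) < Nat.nth p (2 * k + 1) := hnth (by omega)
    have h2 : 2 * k < 2 * j := hnth.lt_iff_lt.mp (by omega)
    have h3 : Nat.nth p (2 * k + 1) ≤ Nat.nth p (2 * j) :=
      hnth.monotone (by omega)
    have h4 : Nat.nth p (2 * k + 1) = Nat.nth p (2 * j) := by omega
    have := hnth.injective h4
    omega
  have huniq : ∀ (n n' i : ℕ), a n ≤ i → i < a (n + 1) → a n' ≤ i → i < a (n' + 1) → n = n' := by
    intro n n' i h1 h2 h3 h4
    by_contra hne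
    rcases Nat.lt_or_ge n n' with h | h
    · have : a (n + 1) ≤ a n' := ha.2.monotone (by omega)
      omega
    · have : a (n' + 1) ≤ a n := ha.2.monotone (by omega)
      omega
  refine ⟨fun i => if h : ∃ n, n ∈ T ∧ a n ≤ i ∧ i < a (n + 1) then x i else !x' i, ?_, ?_⟩
  · -- Matches
    apply Set.Infinite.mono (s := T) _ hTinf
    intro n hn i hi
    have : ∃ n', n' ∈ T ∧ a n' ≤ i ∧ i < a (n' + 1) := ⟨n, hn, hi.1, hi.2⟩
    simp only [dif_pos this]
  · -- not Matches x' a'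
    intro hm
    obtain ⟨m, hm'⟩ := hm.nonempty
    simp only [Set.mem_setOf_eq] at hm'
    have hne : a' m < a' (m + 1) := ha'.2 (by omega)
    by_cases hc : ∀ i ∈ Set.Ico (a' m) (a' (m + 1)), ∃ n, n ∈ T ∧ a n ≤ i ∧ i < a (n + 1)
    · obtain ⟨n, hnT, hn1, hn2⟩ := hc (a' m) ⟨le_refl _, hne⟩
      have hsub : Set.Ico (a' m) (a' (m + 1)) ⊆ Set.Ico (a n) (a (n + 1)) := by
        rintro i ⟨hi1, hi2⟩
        refine ⟨le_trans hn1 hi1, ?_⟩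
        by_contra hgt
        push_neg at hgt
        have hmem : a (n + 1) ∈ Set.Ico (a' m) (a' (m + 1)) := ⟨by omega, by omega⟩
        obtain ⟨n', hT', h1', h2'⟩ := hc _ hmem
        have haa : a (n + 1) < a (n + 2) := ha.2 (by omega)
        have : n' = n + 1 := (huniq n' (n + 1) (a (n + 1)) h1' h2' (le_refl _) haa).symm ▸ rfl
        have heq : n' = n + 1 := huniq n' (n + 1) (a (n + 1)) h1' h2' (le_refl _) haa
        exact hadj n hnT (heq ▸ hT')
      have hpn := hTsub n hnT
      rw [hp] at hpn
      push_neg at hpn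
      obtain ⟨i, hi, hxi⟩ := hpn m hsub
      have hy : (if h : ∃ n, n ∈ T ∧ a n ≤ i ∧ i < a (n + 1) then x i else !x' i) = x i := by
        have hsi := hsub hi
        exact dif_pos ⟨n, hnT, hsi.1, hsi.2⟩
      have := hm' i hi
      rw [hy] at this
      exact hxi this
    · push_neg at hc
      obtain ⟨i, hi, hni⟩ := hc
      have hy : (if h : ∃ n, n ∈ T ∧ a n ≤ i ∧ i < a (n + 1) then x i else !x' i) = !x' i := by
        apply dif_neg
        rintro ⟨n, hn1, hn2, hn3⟩
        have := hni n hn1 hn2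
        omega
      have := hm' i hi
      rw [hy] at this
      simp at this
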